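/- If a 3-uniform hypergraph H contains no pseudo-cycle minus one hyperedge of size ℓ for every 4 ≤ ℓ ≤ L with 3 ∤ ℓ (where L ≥ 4), then for every vertex set S ⊆ V(H) and vertex v ∈ V(H) \ S, the symmetrized hypergraph H_{S,v} also contains no such pseudo-cycle minus one hyperedge. -/

import Mathlib

def HasPseudoCycleMinus {W : Type*} [DecidableEq W] (H : Set (Finset W)) (ℓ : ℕ) : Prop :=
  ∃ v : ℕ → W, ∀ i, i + 2 ≤ ℓ →
    ({v i, v ((i + 1) % ℓ), v ((i + 2) % ℓ)} : Finset W) ∈ H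

/-- The symmetrization `H_{S,v}`: the vertex set is `(V ∖ S) ∪ T_{S,v}` where
`T_{S,v}` is a set of new vertices indexed by `S` (modelled by the summand `↥S` of
`V ⊕ ↥S`); its hyperedges are the hyperedges of `H` disjoint from `S`, together with
all `{vᵢ, x, y}` for `vᵢ ∈ T_{S,v}` and `{v, x, y} ∈ H` with `{x, y} ∩ S = ∅`. -/
def SymmHyp {V : Type*} [DecidableEq V] (H : Set (Finset V)) (S : Set V) (v : V) :
    Set (Finset (V ⊕ ↥S)) :=
  {e' | (∃ e ∈ H, (∀ x ∈ e, x ∉ S) ∧ e' = e.image Sum.inl) ∨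
        (∃ (s : ↥S) (x y : V), ({v, x, y} : Finset V) ∈ H ∧ x ∉ S ∧ y ∉ S ∧
          e' = {Sum.inr s, Sum.inl x, Sum.inl y})}

/-- Lemma 5.3: if `H` contains no pseudo-cycle minus one hyperedge of size `ℓ` for
every `4 ≤ ℓ ≤ L` with `3 ∤ ℓ`, then neither does the symmetrization `H_{S,v}`. -/
theorem stmt17 {V : Type*} [DecidableEq V] (H : Set (Finset V))
    (hH : ∀ e ∈ H, e.card = 3) (L : ℕ) (hL : 4 ≤ L) (S : Set V) (v : V) (hv : v ∉ S)
    (h : ∀ ℓ, 4 ≤ ℓ → ℓ ≤ L → ¬ 3 ∣ ℓ → ¬ HasPseudoCycleMinus H ℓ) :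
    ∀ ℓ, 4 ≤ ℓ → ℓ ≤ L → ¬ 3 ∣ ℓ → ¬ HasPseudoCycleMinus (SymmHyp H S v) ℓ := by
  intro ℓ h4 hℓL h3 ⟨w, hw⟩
  set f : V ⊕ ↥S → V := Sum.elim id (fun _ => v) with hf
  have key : ∀ e ∈ SymmHyp H S v, e.image f ∈ H := by
    rintro e (⟨e₀, he₀, -, rfl⟩ | ⟨s, x, y, hxy, -, -, rfl⟩)
    · rw [Finset.image_image]
      simpa [hf, Sum.elim_comp_inl] using he₀
    · simpa [hf] using hxy
  refine h ℓ h4 hℓL h3 ⟨f ∘ w, fun i hi => ?_⟩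
  have := key _ (hw i hi)
  simpa [Finset.image_insert] using this
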